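/- Nuisance insensitivity bound: let Z (nuisance) be independent of Y, and suppose T is a representation computed from X satisfying the Markov chain (Y,Z) ↔ X ↔ T. If T is sufficient for Y, i.e., I(T;Y) = I(X;Y), then I(T;Z) ≤ I(X;T) − I(X;Y). -/

import Mathlib

open Finset

/-- Mutual information of a joint pmf on a product of finite sets. -/
noncomputable def mutualInfo {A B : Type*} [Fintype A] [Fintype B] (p : A × B → ℝ) : ℝ :=
  ∑ a, ∑ b, p (a, b) * Real.log (p (a, b) / ((∑ b', p (a, b')) * (∑ a', p (a', b))))

private lemma aux_le_sum {A : Type*} [Fintype A] (f : A → ℝ) (h : ∀ a, 0 ≤ f a) (a : A) :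
    f a ≤ ∑ a', f a' :=
  Finset.single_le_sum (fun i _ => h i) (Finset.mem_univ a)

private lemma aux_le_sum2 {A B : Type*} [Fintype A] [Fintype B] (f : A → B → ℝ)
    (h : ∀ a b, 0 ≤ f a b) (a : A) (b : B) : f a b ≤ ∑ a', ∑ b', f a' b' :=
  le_trans (aux_le_sum (f a) (h a) b)
    (aux_le_sum (fun a' => ∑ b', f a' b') (fun a' => Finset.sum_nonneg fun b' _ => h a' b') a)

private lemma aux_le_sum3 {A B C : Type*} [Fintype A] [Fintype B] [Fintype C] (f : A → B → C → ℝ)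
    (h : ∀ a b c, 0 ≤ f a b c) (a : A) (b : B) (c : C) :
    f a b c ≤ ∑ a', ∑ b', ∑ c', f a' b' c' :=
  le_trans (aux_le_sum2 (f a) (h a) b c)
    (aux_le_sum (fun a' => ∑ b', ∑ c', f a' b' c')
      (fun a' => Finset.sum_nonneg fun b' _ => Finset.sum_nonneg fun c' _ => h a' b' c') a)

private lemma aux_gibbs {W : Type*} [Fintype W] (p q : W → ℝ)
    (hp : ∀ w, 0 ≤ p w) (hq : ∀ w, 0 ≤ q w) (hpq : ∀ w, 0 < p w → 0 < q w)
    (hsum : ∑ w, q w ≤ ∑ w, p w) :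
    0 ≤ ∑ w, p w * Real.log (p w / q w) := by
  have key : ∀ w, p w * Real.log (q w / p w) ≤ q w - p w := by
    intro w
    rcases (hp w).eq_or_lt with h0 | h0
    · simp [← h0, hq w]
    · have hqw := hpq w h0
      have := Real.log_le_sub_one_of_pos (div_pos hqw h0)
      calc p w * Real.log (q w / p w) ≤ p w * (q w / p w - 1) :=
            mul_le_mul_of_nonneg_left this (le_of_lt h0)
        _ = q w - p w := by field_simp
  have h1 : ∑ w, p w * Real.log (q w / p w) ≤ 0 := by
    calc ∑ w, p w * Real.log (q w / p w) ≤ ∑ w, (q w - p w) :=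
          Finset.sum_le_sum fun w _ => key w
      _ = ∑ w, q w - ∑ w, p w := Finset.sum_sub_distrib ..
      _ ≤ 0 := by linarith
  have h2 : ∀ w, p w * Real.log (p w / q w) = -(p w * Real.log (q w / p w)) := by
    intro w
    rw [← inv_div, Real.log_inv]
    ring
  rw [Finset.sum_congr rfl fun w _ => h2 w, Finset.sum_neg_distrib]
  linarith

private lemma sum_rot3 {α β γ : Type*} [Fintype α] [Fintype β] [Fintype γ] (f : α → β → γ → ℝ) :
    (∑ c, ∑ a, ∑ b, f a b c) = ∑ a, ∑ b, ∑ c, f a b c := by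
  rw [Finset.sum_comm]
  exact Finset.sum_congr rfl fun a _ => Finset.sum_comm

section Reorder
variable {X Y Z T : Type*} [Fintype X] [Fintype Y] [Fintype Z] [Fintype T]

private lemma sum4_tzxy (f : X → Y → Z → T → ℝ) :
    ∑ t, ∑ z, ∑ x, ∑ y, f x y z t = ∑ w : X × Y × Z × T, f w.1 w.2.1 w.2.2.1 w.2.2.2 := by
  have h : ∑ t, ∑ z, ∑ x, ∑ y, f x y z t
      = ∑ w : T × Z × X × Y, f w.2.2.1 w.2.2.2 w.2.1 w.1 := by
    simp [Fintype.sum_prod_type]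
  rw [h]
  exact Fintype.sum_equiv
    ⟨fun w => (w.2.2.1, w.2.2.2, w.2.1, w.1), fun w => (w.2.2.2, w.2.2.1, w.1, w.2.1),
      fun _ => rfl, fun _ => rfl⟩ _ _ (fun _ => rfl)

private lemma sum4_xtyz (f : X → Y → Z → T → ℝ) :
    ∑ x, ∑ t, ∑ y, ∑ z, f x y z t = ∑ w : X × Y × Z × T, f w.1 w.2.1 w.2.2.1 w.2.2.2 := by
  have h : ∑ x, ∑ t, ∑ y, ∑ z, f x y z t
      = ∑ w : X × T × Y × Z, f w.1 w.2.2.1 w.2.2.2 w.2.1 := by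
    simp [Fintype.sum_prod_type]
  rw [h]
  exact Fintype.sum_equiv
    ⟨fun w => (w.1, w.2.2.1, w.2.2.2, w.2.1), fun w => (w.1, w.2.2.2, w.2.1, w.2.2.1),
      fun _ => rfl, fun _ => rfl⟩ _ _ (fun _ => rfl)

private lemma sum4_tyxz (f : X → Y → Z → T → ℝ) :
    ∑ t, ∑ y, ∑ x, ∑ z, f x y z t = ∑ w : X × Y × Z × T, f w.1 w.2.1 w.2.2.1 w.2.2.2 := by
  have h : ∑ t, ∑ y, ∑ x, ∑ z, f x y z t
      = ∑ w : T × Y × X × Z, f w.2.2.1 w.2.1 w.2.2.2 w.1 := by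
    simp [Fintype.sum_prod_type]
  rw [h]
  exact Fintype.sum_equiv
    ⟨fun w => (w.2.2.1, w.2.1, w.2.2.2, w.1), fun w => (w.2.2.2, w.2.1, w.1, w.2.2.1),
      fun _ => rfl, fun _ => rfl⟩ _ _ (fun _ => rfl)

private lemma sum4_tyzx (f : X → Y → Z → T → ℝ) :
    ∑ t, ∑ y, ∑ z, ∑ x, f x y z t = ∑ w : X × Y × Z × T, f w.1 w.2.1 w.2.2.1 w.2.2.2 := by
  have h : ∑ t, ∑ y, ∑ z, ∑ x, f x y z t
      = ∑ w : T × Y × Z × X, f w.2.2.2 w.2.1 w.2.2.1 w.1 := by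
    simp [Fintype.sum_prod_type]
  rw [h]
  exact Fintype.sum_equiv
    ⟨fun w => (w.2.2.2, w.2.1, w.2.2.1, w.1), fun w => (w.2.2.2, w.2.1, w.2.2.1, w.1),
      fun _ => rfl, fun _ => rfl⟩ _ _ (fun _ => rfl)

private lemma sum4_txyz (f : X → Y → Z → T → ℝ) :
    ∑ t, ∑ x, ∑ y, ∑ z, f x y z t = ∑ w : X × Y × Z × T, f w.1 w.2.1 w.2.2.1 w.2.2.2 := by
  have h : ∑ t, ∑ x, ∑ y, ∑ z, f x y z t
      = ∑ w : T × X × Y × Z, f w.2.1 w.2.2.1 w.2.2.2 w.1 := by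
    simp [Fintype.sum_prod_type]
  rw [h]
  exact Fintype.sum_equiv
    ⟨fun w => (w.2.1, w.2.2.1, w.2.2.2, w.1), fun w => (w.2.2.2, w.1, w.2.1, w.2.2.1),
      fun _ => rfl, fun _ => rfl⟩ _ _ (fun _ => rfl)

end Reorder

section Expand
variable {X Y Z T : Type*} [Fintype X] [Fintype Y] [Fintype Z] [Fintype T]

private lemma expand_TZ (p : X × Y × Z × T → ℝ) :
    mutualInfo (fun w : T × Z => ∑ x, ∑ y, p (x, y, w.2, w.1))
      = ∑ w : X × Y × Z × T, p w * Real.log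
          ((∑ x, ∑ y, p (x, y, w.2.2.1, w.2.2.2)) / ((∑ x, ∑ y, ∑ z, p (x, y, z, w.2.2.2)) * (∑ x, ∑ y, ∑ t, p (x, y, w.2.2.1, t)))) := by
  rw [mutualInfo]
  have h1 : ∀ t : T, (∑ z, ∑ x, ∑ y, p (x, y, z, t)) = ∑ x, ∑ y, ∑ z, p (x, y, z, t) :=
    fun t => sum_rot3 (fun x y z => p (x, y, z, t))
  have h2 : ∀ z : Z, (∑ t, ∑ x, ∑ y, p (x, y, z, t)) = ∑ x, ∑ y, ∑ t, p (x, y, z, t) :=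
    fun z => sum_rot3 (fun x y t => p (x, y, z, t))
  simp only [h1, h2]
  have step : ∀ (t : T) (z : Z), (∑ x, ∑ y, p (x, y, z, t)) * Real.log
        ((∑ x, ∑ y, p (x, y, z, t))/ ((∑ x, ∑ y, ∑ z, p (x, y, z, t)) * (∑ x, ∑ y, ∑ t, p (x, y, z, t))))
      = ∑ x, ∑ y, p (x, y, z, t) * Real.log
        ((∑ x, ∑ y, p (x, y, z, t)) / ((∑ x, ∑ y, ∑ z, p (x, y, z, t)) * (∑ x, ∑ y, ∑ t, p (x, y, z, t)))) := by
    intro t z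
    rw [Finset.sum_mul]
    exact Finset.sum_congr rfl fun x _ => Finset.sum_mul ..
  rw [Finset.sum_congr rfl fun t _ => Finset.sum_congr rfl fun z _ => step t z]
  exact sum4_tzxy (fun x y z t => p (x, y, z, t) * Real.log ((∑ x, ∑ y, p (x, y, z, t)) / ((∑ x, ∑ y, ∑ z, p (x, y, z, t)) * (∑ x, ∑ y, ∑ t, p (x, y, z, t)))))

private lemma expand_XT (p : X × Y × Z × T → ℝ) :
    mutualInfo (fun w : X × T => ∑ y, ∑ z, p (w.1, y, z, w.2))
      = ∑ w : X × Y × Z × T, p w * Real.log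
          ((∑ y, ∑ z, p (w.1, y, z, w.2.2.2)) / ((∑ y, ∑ z, ∑ t, p (w.1, y, z, t)) * (∑ x, ∑ y, ∑ z, p (x, y, z, w.2.2.2)))) := by
  rw [mutualInfo]
  have h1 : ∀ x : X, (∑ t, ∑ y, ∑ z, p (x, y, z, t)) = ∑ y, ∑ z, ∑ t, p (x, y, z, t) :=
    fun x => sum_rot3 (fun y z t => p (x, y, z, t))
  simp only [h1]
  have step : ∀ (x : X) (t : T), (∑ y, ∑ z, p (x, y, z, t)) * Real.log
        ((∑ y, ∑ z, p (x, y, z, t)) / ((∑ y, ∑ z, ∑ t, p (x, y, z, t)) * (∑ x, ∑ y, ∑ z, p (x, y, z, t))))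
      = ∑ y, ∑ z, p (x, y, z, t) * Real.log
        ((∑ y, ∑ z, p (x, y, z, t)) / ((∑ y, ∑ z, ∑ t, p (x, y, z, t)) * (∑ x, ∑ y, ∑ z, p (x, y, z, t)))) := by
    intro x t
    rw [Finset.sum_mul]
    exact Finset.sum_congr rfl fun y _ => Finset.sum_mul ..
  rw [Finset.sum_congr rfl fun x _ => Finset.sum_congr rfl fun t _ => step x t]
  exact sum4_xtyz (fun x y z t => p (x, y, z, t) * Real.log ((∑ y, ∑ z, p (x, y, z, t)) / ((∑ y, ∑ z, ∑ t, p (x, y, z, t)) * (∑ x, ∑ y, ∑ z, p (x, y, z, t)))))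

private lemma expand_TY (p : X × Y × Z × T → ℝ) :
    mutualInfo (fun w : T × Y => ∑ x, ∑ z, p (x, w.2, z, w.1))
      = ∑ w : X × Y × Z × T, p w * Real.log
          ((∑ x, ∑ z, p (x, w.2.1, z, w.2.2.2)) / ((∑ x, ∑ y, ∑ z, p (x, y, z, w.2.2.2)) * (∑ x, ∑ z, ∑ t, p (x, w.2.1, z, t)))) := by
  rw [mutualInfo]
  have h1 : ∀ t : T, (∑ y, ∑ x, ∑ z, p (x, y, z, t)) = ∑ x, ∑ y, ∑ z, p (x, y, z, t) :=
    fun t => Finset.sum_comm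
  have h2 : ∀ y : Y, (∑ t, ∑ x, ∑ z, p (x, y, z, t)) = ∑ x, ∑ z, ∑ t, p (x, y, z, t) :=
    fun y => sum_rot3 (fun x z t => p (x, y, z, t))
  simp only [h1, h2]
  have step : ∀ (t : T) (y : Y), (∑ x, ∑ z, p (x, y, z, t)) * Real.log
        ((∑ x, ∑ z, p (x, y, z, t)) / ((∑ x, ∑ y, ∑ z, p (x, y, z, t)) * (∑ x, ∑ z, ∑ t, p (x, y, z, t))))
      = ∑ x, ∑ z, p (x, y, z, t) * Real.log
        ((∑ x, ∑ z, p (x, y, z, t)) / ((∑ x, ∑ y, ∑ z, p (x, y, z, t)) * (∑ x, ∑ z, ∑ t, p (x, y, z, t)))) := by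
    intro t y
    rw [Finset.sum_mul]
    exact Finset.sum_congr rfl fun x _ => Finset.sum_mul ..
  rw [Finset.sum_congr rfl fun t _ => Finset.sum_congr rfl fun y _ => step t y]
  exact sum4_tyxz (fun x y z t => p (x, y, z, t) * Real.log ((∑ x, ∑ z, p (x, y, z, t)) / ((∑ x, ∑ y, ∑ z, p (x, y, z, t)) * (∑ x, ∑ z, ∑ t, p (x, y, z, t)))))

end Expand

theorem nuisance_insensitivity_bound
    {X Y Z T : Type*} [Fintype X] [Fintype Y] [Fintype Z] [Fintype T]
    (p : X × Y × Z × T → ℝ)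
    (hp0 : ∀ w, 0 ≤ p w) (hp1 : ∑ w, p w = 1)
    (hindep : ∀ y z,
      (∑ x, ∑ t, p (x, y, z, t))
        = (∑ x, ∑ z', ∑ t, p (x, y, z', t)) * (∑ x, ∑ y', ∑ t, p (x, y', z, t)))
    (hmarkov : ∀ x y z t,
      p (x, y, z, t) * (∑ y', ∑ z', ∑ t', p (x, y', z', t'))
        = (∑ t', p (x, y, z, t')) * (∑ y', ∑ z', p (x, y', z', t)))
    (hsuff : mutualInfo (fun w : T × Y => ∑ x, ∑ z, p (x, w.2, z, w.1))
        = mutualInfo (fun w : X × Y => ∑ z, ∑ t, p (w.1, w.2, z, t))) :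
    mutualInfo (fun w : T × Z => ∑ x, ∑ y, p (x, y, w.2, w.1))
      ≤ mutualInfo (fun w : X × T => ∑ y, ∑ z, p (w.1, y, z, w.2))
        - mutualInfo (fun w : X × Y => ∑ z, ∑ t, p (w.1, w.2, z, t)) := by
  rw [← hsuff, expand_TZ p, expand_XT p, expand_TY p]
  -- replace the I(X;T) integrand using the Markov property
  have EM : (∑ w : X × Y × Z × T, p w * Real.log ((∑ y, ∑ z, p (w.1, y, z, w.2.2.2)) / ((∑ y, ∑ z, ∑ t, p (w.1, y, z, t)) * (∑ x, ∑ y, ∑ z, p (x, y, z, w.2.2.2)))))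
      = ∑ w : X × Y × Z × T, p w * Real.log (p w / ((∑ t', p (w.1, w.2.1, w.2.2.1, t')) * (∑ x, ∑ y, ∑ z, p (x, y, z, w.2.2.2)))) := by
    refine Finset.sum_congr rfl fun w _ => ?_
    obtain ⟨x, y, z, t⟩ := w
    rcases (hp0 (x, y, z, t)).eq_or_lt with h0 | h0
    · rw [← h0]; ring
    · have hPX : (0:ℝ) < (∑ y, ∑ z, ∑ t, p (x, y, z, t)) :=
        lt_of_lt_of_le h0 (aux_le_sum3 (fun a b c => p (x, a, b, c)) (fun _ _ _ => hp0 _) y z t)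
      have hPT : (0:ℝ) < (∑ x, ∑ y, ∑ z, p (x, y, z, t)) :=
        lt_of_lt_of_le h0 (aux_le_sum3 (fun a b c => p (a, b, c, t)) (fun _ _ _ => hp0 _) x y z)
      have hPXYZ : (0:ℝ) < (∑ t', p (x, y, z, t')) :=
        lt_of_lt_of_le h0 (aux_le_sum (fun c => p (x, y, z, c)) (fun _ => hp0 _) t)
      have harg : (∑ y, ∑ z, p (x, y, z, t)) / ((∑ y, ∑ z, ∑ t, p (x, y, z, t)) * (∑ x, ∑ y, ∑ z, p (x, y, z, t)))
          = p (x, y, z, t) / ((∑ t', p (x, y, z, t')) * (∑ x, ∑ y, ∑ z, p (x, y, z, t))) := by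
        rw [div_eq_div_iff (mul_pos hPX hPT).ne' (mul_pos hPXYZ hPT).ne']
        linear_combination (-(∑ x, ∑ y, ∑ z, p (x, y, z, t))) * (hmarkov x y z t)
      rw [harg]
  rw [EM, ← sub_nonneg]
  -- combine the three integrands into a single relative-entropy integrand
  have comb : ((∑ w : X × Y × Z × T, p w * Real.log (p w / ((∑ t', p (w.1, w.2.1, w.2.2.1, t')) * (∑ x, ∑ y, ∑ z, p (x, y, z, w.2.2.2)))))
        - ∑ w : X × Y × Z × T, p w * Real.log ((∑ x, ∑ z, p (x, w.2.1, z, w.2.2.2)) / ((∑ x, ∑ y, ∑ z, p (x, y, z, w.2.2.2)) * (∑ x, ∑ z, ∑ t, p (x, w.2.1, z, t)))))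
        - ∑ w : X × Y × Z × T, p w * Real.log ((∑ x, ∑ y, p (x, y, w.2.2.1, w.2.2.2)) / ((∑ x, ∑ y, ∑ z, p (x, y, z, w.2.2.2)) * (∑ x, ∑ y, ∑ t, p (x, y, w.2.2.1, t))))
      = ∑ w : X × Y × Z × T, p w * Real.log (p w / ((∑ t', p (w.1, w.2.1, w.2.2.1, t')) * (∑ x, ∑ z, p (x, w.2.1, z, w.2.2.2)) * (∑ x, ∑ y, p (x, y, w.2.2.1, w.2.2.2)) / ((∑ x, ∑ y, ∑ z, p (x, y, z, w.2.2.2)) * (∑ x, ∑ z, ∑ t, p (x, w.2.1, z, t)) * (∑ x, ∑ y, ∑ t, p (x, y, w.2.2.1, t))))) := by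
    rw [← Finset.sum_sub_distrib, ← Finset.sum_sub_distrib]
    refine Finset.sum_congr rfl fun w _ => ?_
    obtain ⟨x, y, z, t⟩ := w
    rcases (hp0 (x, y, z, t)).eq_or_lt with h0 | h0
    · rw [← h0]; ring
    · have hPT : (0:ℝ) < (∑ x, ∑ y, ∑ z, p (x, y, z, t)) :=
        lt_of_lt_of_le h0 (aux_le_sum3 (fun a b c => p (a, b, c, t)) (fun _ _ _ => hp0 _) x y z)
      have hPY : (0:ℝ) < (∑ x, ∑ z, ∑ t, p (x, y, z, t)) :=
        lt_of_lt_of_le h0 (aux_le_sum3 (fun a b c => p (a, y, b, c)) (fun _ _ _ => hp0 _) x z t)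
      have hPZ : (0:ℝ) < (∑ x, ∑ y, ∑ t, p (x, y, z, t)) :=
        lt_of_lt_of_le h0 (aux_le_sum3 (fun a b c => p (a, b, z, c)) (fun _ _ _ => hp0 _) x y t)
      have hPXYZ : (0:ℝ) < (∑ t', p (x, y, z, t')) :=
        lt_of_lt_of_le h0 (aux_le_sum (fun c => p (x, y, z, c)) (fun _ => hp0 _) t)
      have hPTY : (0:ℝ) < (∑ x, ∑ z, p (x, y, z, t)) :=
        lt_of_lt_of_le h0 (aux_le_sum2 (fun a b => p (a, y, b, t)) (fun _ _ => hp0 _) x z)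
      have hPTZ : (0:ℝ) < (∑ x, ∑ y, p (x, y, z, t)) :=
        lt_of_lt_of_le h0 (aux_le_sum2 (fun a b => p (a, b, z, t)) (fun _ _ => hp0 _) x y)
      have hA : (0:ℝ) < p (x, y, z, t) / ((∑ t', p (x, y, z, t')) * (∑ x, ∑ y, ∑ z, p (x, y, z, t))) :=
        div_pos h0 (mul_pos hPXYZ hPT)
      have hB : (0:ℝ) < (∑ x, ∑ z, p (x, y, z, t)) / ((∑ x, ∑ y, ∑ z, p (x, y, z, t)) * (∑ x, ∑ z, ∑ t, p (x, y, z, t))) :=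
        div_pos hPTY (mul_pos hPT hPY)
      have hC : (0:ℝ) < (∑ x, ∑ y, p (x, y, z, t)) / ((∑ x, ∑ y, ∑ z, p (x, y, z, t)) * (∑ x, ∑ y, ∑ t, p (x, y, z, t))) :=
        div_pos hPTZ (mul_pos hPT hPZ)
      have e1 : (p (x, y, z, t) / ((∑ t', p (x, y, z, t')) * (∑ x, ∑ y, ∑ z, p (x, y, z, t))))
            / (((∑ x, ∑ z, p (x, y, z, t)) / ((∑ x, ∑ y, ∑ z, p (x, y, z, t)) * (∑ x, ∑ z, ∑ t, p (x, y, z, t)))) * ((∑ x, ∑ y, p (x, y, z, t)) / ((∑ x, ∑ y, ∑ z, p (x, y, z, t)) * (∑ x, ∑ y, ∑ t, p (x, y, z, t)))))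
          = p (x, y, z, t) / ((∑ t', p (x, y, z, t')) * (∑ x, ∑ z, p (x, y, z, t)) * (∑ x, ∑ y, p (x, y, z, t)) / ((∑ x, ∑ y, ∑ z, p (x, y, z, t)) * (∑ x, ∑ z, ∑ t, p (x, y, z, t)) * (∑ x, ∑ y, ∑ t, p (x, y, z, t)))) := by
        field_simp
      have e2 : Real.log (p (x, y, z, t) / ((∑ t', p (x, y, z, t')) * (∑ x, ∑ y, ∑ z, p (x, y, z, t))))
            - Real.log ((∑ x, ∑ z, p (x, y, z, t)) / ((∑ x, ∑ y, ∑ z, p (x, y, z, t)) * (∑ x, ∑ z, ∑ t, p (x, y, z, t))))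
            - Real.log ((∑ x, ∑ y, p (x, y, z, t)) / ((∑ x, ∑ y, ∑ z, p (x, y, z, t)) * (∑ x, ∑ y, ∑ t, p (x, y, z, t))))
          = Real.log (p (x, y, z, t) / ((∑ t', p (x, y, z, t')) * (∑ x, ∑ z, p (x, y, z, t)) * (∑ x, ∑ y, p (x, y, z, t)) / ((∑ x, ∑ y, ∑ z, p (x, y, z, t)) * (∑ x, ∑ z, ∑ t, p (x, y, z, t)) * (∑ x, ∑ y, ∑ t, p (x, y, z, t))))) := by
        rw [sub_sub, ← Real.log_mul hB.ne' hC.ne', ← Real.log_div hA.ne' (mul_pos hB hC).ne', e1]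
      calc p (x, y, z, t) * Real.log (p (x, y, z, t) / ((∑ t', p (x, y, z, t')) * (∑ x, ∑ y, ∑ z, p (x, y, z, t))))
            - p (x, y, z, t) * Real.log ((∑ x, ∑ z, p (x, y, z, t)) / ((∑ x, ∑ y, ∑ z, p (x, y, z, t)) * (∑ x, ∑ z, ∑ t, p (x, y, z, t))))
            - p (x, y, z, t) * Real.log ((∑ x, ∑ y, p (x, y, z, t)) / ((∑ x, ∑ y, ∑ z, p (x, y, z, t)) * (∑ x, ∑ y, ∑ t, p (x, y, z, t))))
          = p (x, y, z, t) * (Real.log (p (x, y, z, t) / ((∑ t', p (x, y, z, t')) * (∑ x, ∑ y, ∑ z, p (x, y, z, t))))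
            - Real.log ((∑ x, ∑ z, p (x, y, z, t)) / ((∑ x, ∑ y, ∑ z, p (x, y, z, t)) * (∑ x, ∑ z, ∑ t, p (x, y, z, t))))
            - Real.log ((∑ x, ∑ y, p (x, y, z, t)) / ((∑ x, ∑ y, ∑ z, p (x, y, z, t)) * (∑ x, ∑ y, ∑ t, p (x, y, z, t))))) := by ring
        _ = p (x, y, z, t) * Real.log (p (x, y, z, t) / ((∑ t', p (x, y, z, t')) * (∑ x, ∑ z, p (x, y, z, t)) * (∑ x, ∑ y, p (x, y, z, t)) / ((∑ x, ∑ y, ∑ z, p (x, y, z, t)) * (∑ x, ∑ z, ∑ t, p (x, y, z, t)) * (∑ x, ∑ y, ∑ t, p (x, y, z, t))))) := by rw [e2]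
  rw [comb]
  refine aux_gibbs p (fun w => (∑ t', p (w.1, w.2.1, w.2.2.1, t')) * (∑ x, ∑ z, p (x, w.2.1, z, w.2.2.2)) * (∑ x, ∑ y, p (x, y, w.2.2.1, w.2.2.2)) / ((∑ x, ∑ y, ∑ z, p (x, y, z, w.2.2.2)) * (∑ x, ∑ z, ∑ t, p (x, w.2.1, z, t)) * (∑ x, ∑ y, ∑ t, p (x, y, w.2.2.1, t)))) hp0 ?_ ?_ ?_
  · intro w
    exact div_nonneg
      (mul_nonneg (mul_nonneg (Finset.sum_nonneg fun _ _ => hp0 _)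
          (Finset.sum_nonneg fun _ _ => Finset.sum_nonneg fun _ _ => hp0 _))
        (Finset.sum_nonneg fun _ _ => Finset.sum_nonneg fun _ _ => hp0 _))
      (mul_nonneg (mul_nonneg
          (Finset.sum_nonneg fun _ _ => Finset.sum_nonneg fun _ _ => Finset.sum_nonneg fun _ _ => hp0 _)
          (Finset.sum_nonneg fun _ _ => Finset.sum_nonneg fun _ _ => Finset.sum_nonneg fun _ _ => hp0 _))
        (Finset.sum_nonneg fun _ _ => Finset.sum_nonneg fun _ _ => Finset.sum_nonneg fun _ _ => hp0 _))
  · rintro ⟨x, y, z, t⟩ h0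
    have hPT : (0:ℝ) < (∑ x, ∑ y, ∑ z, p (x, y, z, t)) :=
      lt_of_lt_of_le h0 (aux_le_sum3 (fun a b c => p (a, b, c, t)) (fun _ _ _ => hp0 _) x y z)
    have hPY : (0:ℝ) < (∑ x, ∑ z, ∑ t, p (x, y, z, t)) :=
      lt_of_lt_of_le h0 (aux_le_sum3 (fun a b c => p (a, y, b, c)) (fun _ _ _ => hp0 _) x z t)
    have hPZ : (0:ℝ) < (∑ x, ∑ y, ∑ t, p (x, y, z, t)) :=
      lt_of_lt_of_le h0 (aux_le_sum3 (fun a b c => p (a, b, z, c)) (fun _ _ _ => hp0 _) x y t)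
    have hPXYZ : (0:ℝ) < (∑ t', p (x, y, z, t')) :=
      lt_of_lt_of_le h0 (aux_le_sum (fun c => p (x, y, z, c)) (fun _ => hp0 _) t)
    have hPTY : (0:ℝ) < (∑ x, ∑ z, p (x, y, z, t)) :=
      lt_of_lt_of_le h0 (aux_le_sum2 (fun a b => p (a, y, b, t)) (fun _ _ => hp0 _) x z)
    have hPTZ : (0:ℝ) < (∑ x, ∑ y, p (x, y, z, t)) :=
      lt_of_lt_of_le h0 (aux_le_sum2 (fun a b => p (a, b, z, t)) (fun _ _ => hp0 _) x y)
    exact div_pos (mul_pos (mul_pos hPXYZ hPTY) hPTZ) (mul_pos (mul_pos hPT hPY) hPZ)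
  · rw [hp1]
    -- the "fake" joint pmf q sums to 1
    have leTY_Y : ∀ t y, (∑ x, ∑ z, p (x, y, z, t)) ≤ (∑ x, ∑ z, ∑ t, p (x, y, z, t)) := fun t y =>
      Finset.sum_le_sum fun x _ => Finset.sum_le_sum fun z _ =>
        aux_le_sum (fun c => p (x, y, z, c)) (fun _ => hp0 _) t
    have leTZ_Z : ∀ t z, (∑ x, ∑ y, p (x, y, z, t)) ≤ (∑ x, ∑ y, ∑ t, p (x, y, z, t)) := fun t z =>
      Finset.sum_le_sum fun x _ => Finset.sum_le_sum fun y _ =>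
        aux_le_sum (fun c => p (x, y, z, c)) (fun _ => hp0 _) t
    have leTY_T : ∀ t y, (∑ x, ∑ z, p (x, y, z, t)) ≤ (∑ x, ∑ y, ∑ z, p (x, y, z, t)) := fun t y =>
      Finset.sum_le_sum fun x _ =>
        aux_le_sum (fun b => ∑ z, p (x, b, z, t))
          (fun b => Finset.sum_nonneg fun _ _ => hp0 _) y
    have hTYnn : ∀ t y, (0:ℝ) ≤ (∑ x, ∑ z, p (x, y, z, t)) := fun t y =>
      Finset.sum_nonneg fun _ _ => Finset.sum_nonneg fun _ _ => hp0 _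
    have h0 : (∑ w : X × Y × Z × T, (∑ t', p (w.1, w.2.1, w.2.2.1, t')) * (∑ x, ∑ z, p (x, w.2.1, z, w.2.2.2)) * (∑ x, ∑ y, p (x, y, w.2.2.1, w.2.2.2)) / ((∑ x, ∑ y, ∑ z, p (x, y, z, w.2.2.2)) * (∑ x, ∑ z, ∑ t, p (x, w.2.1, z, t)) * (∑ x, ∑ y, ∑ t, p (x, y, w.2.2.1, t))))
        = ∑ t, ∑ y, ∑ z, ∑ x, (∑ t', p (x, y, z, t')) * (∑ x, ∑ z, p (x, y, z, t)) * (∑ x, ∑ y, p (x, y, z, t)) / ((∑ x, ∑ y, ∑ z, p (x, y, z, t)) * (∑ x, ∑ z, ∑ t, p (x, y, z, t)) * (∑ x, ∑ y, ∑ t, p (x, y, z, t))) :=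
      (sum4_tyzx (fun x y z t => (∑ t', p (x, y, z, t')) * (∑ x, ∑ z, p (x, y, z, t)) * (∑ x, ∑ y, p (x, y, z, t)) / ((∑ x, ∑ y, ∑ z, p (x, y, z, t)) * (∑ x, ∑ z, ∑ t, p (x, y, z, t)) * (∑ x, ∑ y, ∑ t, p (x, y, z, t))))).symm
    have s1 : ∀ t y z, (∑ x, (∑ t', p (x, y, z, t')) * (∑ x, ∑ z, p (x, y, z, t)) * (∑ x, ∑ y, p (x, y, z, t)) / ((∑ x, ∑ y, ∑ z, p (x, y, z, t)) * (∑ x, ∑ z, ∑ t, p (x, y, z, t)) * (∑ x, ∑ y, ∑ t, p (x, y, z, t))))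
        = (∑ x, ∑ z, p (x, y, z, t)) * (∑ x, ∑ y, p (x, y, z, t)) / (∑ x, ∑ y, ∑ z, p (x, y, z, t)) := by
      intro t y z
      have e : ∀ x, (∑ t', p (x, y, z, t')) * (∑ x, ∑ z, p (x, y, z, t)) * (∑ x, ∑ y, p (x, y, z, t)) / ((∑ x, ∑ y, ∑ z, p (x, y, z, t)) * (∑ x, ∑ z, ∑ t, p (x, y, z, t)) * (∑ x, ∑ y, ∑ t, p (x, y, z, t)))
          = (∑ t', p (x, y, z, t')) *
            ((∑ x, ∑ z, p (x, y, z, t)) * (∑ x, ∑ y, p (x, y, z, t)) / ((∑ x, ∑ y, ∑ z, p (x, y, z, t)) * (∑ x, ∑ z, ∑ t, p (x, y, z, t)) * (∑ x, ∑ y, ∑ t, p (x, y, z, t)))) :=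
        fun x => by ring
      rw [Finset.sum_congr rfl fun x _ => e x, ← Finset.sum_mul, hindep y z]
      by_cases hY : (∑ x, ∑ z, ∑ t, p (x, y, z, t)) = 0
      · have hTY0 : (∑ x, ∑ z, p (x, y, z, t)) = 0 :=
          le_antisymm (hY ▸ leTY_Y t y) (hTYnn t y)
        simp [hY, hTY0]
      by_cases hZ : (∑ x, ∑ y, ∑ t, p (x, y, z, t)) = 0
      · have hTZ0 : (∑ x, ∑ y, p (x, y, z, t)) = 0 :=
          le_antisymm (hZ ▸ leTZ_Z t z)
            (Finset.sum_nonneg fun _ _ => Finset.sum_nonneg fun _ _ => hp0 _)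
        simp [hZ, hTZ0]
      by_cases hT : (∑ x, ∑ y, ∑ z, p (x, y, z, t)) = 0
      · simp [hT]
      · field_simp
    have s2 : ∀ t y, (∑ z, (∑ x, ∑ z, p (x, y, z, t)) * (∑ x, ∑ y, p (x, y, z, t)) / (∑ x, ∑ y, ∑ z, p (x, y, z, t))) = (∑ x, ∑ z, p (x, y, z, t)) := by
      intro t y
      have e : ∀ z, (∑ x, ∑ z, p (x, y, z, t)) * (∑ x, ∑ y, p (x, y, z, t)) / (∑ x, ∑ y, ∑ z, p (x, y, z, t))
          = (∑ x, ∑ y, p (x, y, z, t)) * ((∑ x, ∑ z, p (x, y, z, t)) / (∑ x, ∑ y, ∑ z, p (x, y, z, t))) := fun z => by ring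
      have hsumz : (∑ z, (∑ x, ∑ y, p (x, y, z, t))) = (∑ x, ∑ y, ∑ z, p (x, y, z, t)) :=
        sum_rot3 (fun x y z => p (x, y, z, t))
      rw [Finset.sum_congr rfl fun z _ => e z, ← Finset.sum_mul, hsumz]
      by_cases hT : (∑ x, ∑ y, ∑ z, p (x, y, z, t)) = 0
      · have hTY0 : (∑ x, ∑ z, p (x, y, z, t)) = 0 :=
          le_antisymm (hT ▸ leTY_T t y) (hTYnn t y)
        simp [hT, hTY0]
      · field_simp
    have s3 : ∀ t, (∑ y, (∑ x, ∑ z, p (x, y, z, t))) = (∑ x, ∑ y, ∑ z, p (x, y, z, t)) := fun t => Finset.sum_comm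
    have s4 : (∑ t, (∑ x, ∑ y, ∑ z, p (x, y, z, t))) = ∑ w : X × Y × Z × T, p w :=
      sum4_txyz (fun x y z t => p (x, y, z, t))
    refine le_of_eq ?_
    rw [h0, Finset.sum_congr rfl fun t _ => Finset.sum_congr rfl fun y _ =>
          Finset.sum_congr rfl fun z _ => s1 t y z,
        Finset.sum_congr rfl fun t _ => Finset.sum_congr rfl fun y _ => s2 t y,
        Finset.sum_congr rfl fun t _ => s3 t, s4, hp1]
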